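/- Let B̄ denote the image of ℤ × ℤ in G₁ under the base map of, a finitely generated subgroup of G₁. Then of((1,0)) does not lie in the subgroup t·B̄·t⁻¹, yet every finite-index subgroup H of G₁ with t·B̄·t⁻¹ ≤ H satisfies of((1,0)) ∈ H. Hence the finitely generated subgroup t·B̄·t⁻¹ is not an intersection of finite-index subgroups of G₁, so G₁ is not LERF. -/

import Mathlib

def θ₀ : (ℤ × ℤ) →+ (ℤ × ℤ) where
  toFun p := (5 * p.1 + 2 * p.2, -p.1)
  map_zero' := by simp
  map_add' p q := by
    simp only [Prod.fst_add, Prod.snd_add, Prod.mk_add_mk, Prod.mk.injEq]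
    constructor <;> ring

/-- The multiplicative version of `θ₀`. -/
def Θ₁ : Multiplicative (ℤ × ℤ) →* Multiplicative (ℤ × ℤ) :=
  AddMonoidHom.toMultiplicative θ₀

theorem Θ₁_injective : Function.Injective Θ₁ := by
  intro p q h
  have h' : θ₀ p.toAdd = θ₀ q.toAdd := h
  have : p.toAdd = q.toAdd := by
    have h1 := congrArg Prod.fst h'
    have h2 := congrArg Prod.snd h'
    simp only [θ₀, AddMonoidHom.coe_mk, ZeroHom.coe_mk] at h1 h2
    ext <;> omega
  exact this

/-- The isomorphism from the base group onto the range of `Θ₁`. -/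
noncomputable def φ₁ : (⊤ : Subgroup (Multiplicative (ℤ × ℤ))) ≃* Θ₁.range :=
  Subgroup.topEquiv.trans (MonoidHom.ofInjective Θ₁_injective)

/-- The ascending HNN extension of `ℤ × ℤ` along `θ₀`. -/
abbrev G₁ := HNNExtension (Multiplicative (ℤ × ℤ)) ⊤ Θ₁.range φ₁


/-- The image of the base group `ℤ × ℤ` in `G₁` under the canonical map `of`. -/
noncomputable def Bbar : Subgroup G₁ := (HNNExtension.of : Multiplicative (ℤ × ℤ) →* G₁).range

/-- The conjugate `t • K • t⁻¹` of a subgroup `K` by an element `t`. -/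
def conjSubgroup {G : Type*} [Group G] (t : G) (K : Subgroup G) : Subgroup G :=
  K.map (MulAut.conj t).toMonoidHom

/-- A group is LERF if every finitely generated subgroup is an intersection of
finite-index subgroups. -/
def IsLERF (G : Type*) [Group G] : Prop :=
  ∀ K : Subgroup G, K.FG →
    ∃ 𝒮 : Set (Subgroup G), (∀ H ∈ 𝒮, H.index ≠ 0) ∧ K = sInf 𝒮

/-- `B̄` is finitely generated, `of (1,0)` is not in `t • B̄ • t⁻¹`, but it lies in every
finite-index subgroup containing `t • B̄ • t⁻¹`; hence `t • B̄ • t⁻¹` is a finitely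
generated subgroup which is not an intersection of finite-index subgroups,
and `G₁` is not LERF. -/

instance : AddGroup.FG (ℤ × ℤ) := by
  rw [AddGroup.fg_def]
  refine ⟨{((1 : ℤ), (0 : ℤ)), ((0 : ℤ), (1 : ℤ))}, ?_⟩
  rw [eq_top_iff]
  simp only [Finset.coe_insert, Finset.coe_singleton]
  rintro ⟨a, b⟩ -
  have h1 : ((1 : ℤ), (0 : ℤ)) ∈ AddSubgroup.closure ({((1 : ℤ), (0 : ℤ)), ((0 : ℤ), (1 : ℤ))} : Set (ℤ × ℤ)) :=
    AddSubgroup.subset_closure (by simp)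
  have h2 : ((0 : ℤ), (1 : ℤ)) ∈ AddSubgroup.closure ({((1 : ℤ), (0 : ℤ)), ((0 : ℤ), (1 : ℤ))} : Set (ℤ × ℤ)) :=
    AddSubgroup.subset_closure (by simp)
  have : (a, b) = a • ((1 : ℤ), (0 : ℤ)) + b • ((0 : ℤ), (1 : ℤ)) := by
    simp [Prod.ext_iff]
  rw [this]
  exact add_mem (zsmul_mem h1 a) (zsmul_mem h2 b)

lemma Subgroup.FG.map' {G H : Type*} [Group G] [Group H] (f : G →* H) {K : Subgroup G}
    (h : K.FG) : (K.map f).FG := by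
  rw [Subgroup.fg_iff] at h ⊢
  obtain ⟨S, hS, hfin⟩ := h
  exact ⟨f '' S, by rw [← hS, MonoidHom.map_closure], hfin.image f⟩

lemma key_conj (x : Multiplicative (ℤ × ℤ)) :
    HNNExtension.t * HNNExtension.of x * HNNExtension.t⁻¹ =
      (HNNExtension.of (Θ₁ x) : G₁) := by
  have h := HNNExtension.equiv_eq_conj (φ := φ₁)
    (⟨x, trivial⟩ : (⊤ : Subgroup (Multiplicative (ℤ × ℤ))))
  have h2 : ((φ₁ ⟨x, trivial⟩ : Θ₁.range) : Multiplicative (ℤ × ℤ)) = Θ₁ x := by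
    simp [φ₁, MonoidHom.ofInjective_apply]
  rw [h2] at h
  exact h.symm

lemma conj_Bbar_eq : conjSubgroup HNNExtension.t Bbar =
    ((HNNExtension.of : Multiplicative (ℤ × ℤ) →* G₁).comp Θ₁).range := by
  ext g
  constructor
  · rintro ⟨y, ⟨x, rfl⟩, rfl⟩
    exact ⟨x, (key_conj x).symm⟩
  · rintro ⟨x, rfl⟩
    exact ⟨HNNExtension.of x, ⟨x, rfl⟩, key_conj x⟩

lemma conj_le_Bbar : conjSubgroup HNNExtension.t Bbar ≤ Bbar := by
  rw [conj_Bbar_eq]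
  rintro g ⟨x, rfl⟩
  exact ⟨Θ₁ x, rfl⟩

lemma not_mem_conj : HNNExtension.of (Multiplicative.ofAdd ((1 : ℤ), (0 : ℤ))) ∉
    conjSubgroup HNNExtension.t Bbar := by
  rw [conj_Bbar_eq]
  rintro ⟨x, hx⟩
  have hx2 : HNNExtension.of (Θ₁ x) = (HNNExtension.of (Multiplicative.ofAdd ((1 : ℤ), (0 : ℤ))) : G₁) := hx
  have hx' : Θ₁ x = Multiplicative.ofAdd ((1 : ℤ), (0 : ℤ)) :=
    HNNExtension.of_injective (φ := φ₁) hx2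
  have h2 : θ₀ x.toAdd = ((1 : ℤ), (0 : ℤ)) := hx'
  have h3 := congrArg Prod.fst h2
  have h4 := congrArg Prod.snd h2
  simp only [θ₀, AddMonoidHom.coe_mk, ZeroHom.coe_mk] at h3 h4
  omega

lemma mem_of_finiteIndex (H : Subgroup G₁) (hind : H.index ≠ 0)
    (hle : conjSubgroup HNNExtension.t Bbar ≤ H) :
    HNNExtension.of (Multiplicative.ofAdd ((1 : ℤ), (0 : ℤ))) ∈ H := by
  haveI : H.FiniteIndex := ⟨hind⟩
  set N := H.normalCore with hN
  haveI : N.FiniteIndex := Subgroup.finiteIndex_normalCore H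
  haveI : Finite (G₁ ⧸ N) := Subgroup.finite_quotient_of_finiteIndex
  set q := QuotientGroup.mk' N with hq
  have h1 : (conjSubgroup HNNExtension.t Bbar).map q =
      conjSubgroup (q HNNExtension.t) (Bbar.map q) := by
    rw [conjSubgroup, conjSubgroup, Subgroup.map_map, Subgroup.map_map]
    congr 1
  have hle1 : conjSubgroup (q HNNExtension.t) (Bbar.map q) ≤ Bbar.map q := by
    rw [← h1]
    exact Subgroup.map_mono conj_le_Bbar
  have hcard : Nat.card (Bbar.map q) ≤
      Nat.card (conjSubgroup (q HNNExtension.t) (Bbar.map q)) := by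
    have := Nat.card_congr (Subgroup.equivMapOfInjective (Bbar.map q)
      (MulAut.conj (q HNNExtension.t)).toMonoidHom
      (MulAut.conj (q HNNExtension.t)).injective).toEquiv
    exact le_of_eq this
  have heq : conjSubgroup (q HNNExtension.t) (Bbar.map q) = Bbar.map q :=
    Subgroup.eq_of_le_of_card_ge hle1 hcard
  have hmem : q (HNNExtension.of (Multiplicative.ofAdd ((1 : ℤ), (0 : ℤ)))) ∈
      H.map q := by
    have : q (HNNExtension.of (Multiplicative.ofAdd ((1 : ℤ), (0 : ℤ)))) ∈ Bbar.map q :=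
      ⟨_, ⟨Multiplicative.ofAdd ((1 : ℤ), (0 : ℤ)), rfl⟩, rfl⟩
    rw [← heq, ← h1] at this
    exact Subgroup.map_mono hle this
  obtain ⟨h, hhH, hqh⟩ := hmem
  have : HNNExtension.of (Multiplicative.ofAdd ((1 : ℤ), (0 : ℤ))) * h⁻¹ ∈ N := by
    have : q (HNNExtension.of (Multiplicative.ofAdd ((1 : ℤ), (0 : ℤ))) * h⁻¹) = 1 := by
      rw [map_mul, map_inv, hqh, mul_inv_cancel]
    rwa [← QuotientGroup.eq_one_iff]
  have hNH : N ≤ H := Subgroup.normalCore_le H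
  have := mul_mem (hNH this) hhH
  rwa [inv_mul_cancel_right] at this

theorem G₁_not_LERF :
    Bbar.FG ∧
    HNNExtension.of (Multiplicative.ofAdd ((1 : ℤ), (0 : ℤ))) ∉
      conjSubgroup HNNExtension.t Bbar ∧
    (∀ H : Subgroup G₁, H.index ≠ 0 → conjSubgroup HNNExtension.t Bbar ≤ H →
      HNNExtension.of (Multiplicative.ofAdd ((1 : ℤ), (0 : ℤ))) ∈ H) ∧
    (¬ ∃ 𝒮 : Set (Subgroup G₁), (∀ H ∈ 𝒮, H.index ≠ 0) ∧
      conjSubgroup HNNExtension.t Bbar = sInf 𝒮) ∧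
    ¬ IsLERF G₁ := by
  have fg : Bbar.FG := by
    rw [← Group.fg_iff_subgroup_fg]
    exact Group.fg_range HNNExtension.of
  refine ⟨fg, not_mem_conj, mem_of_finiteIndex, ?_, ?_⟩
  · rintro ⟨𝒮, h𝒮, heq⟩
    apply not_mem_conj
    rw [heq, Subgroup.mem_sInf]
    intro H hH
    exact mem_of_finiteIndex H (h𝒮 H hH) (heq ▸ sInf_le hH)
  · intro hlerf
    obtain ⟨𝒮, h𝒮, heq⟩ := hlerf (conjSubgroup HNNExtension.t Bbar)
      (Subgroup.FG.map' _ fg)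
    apply not_mem_conj
    rw [heq, Subgroup.mem_sInf]
    intro H hH
    exact mem_of_finiteIndex H (h𝒮 H hH) (heq ▸ sInf_le hH)
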